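/- Let X, X_1, X_2, … be independent identically distributed nonnegative random variables, and let c > 0 and t > 0 be such that P(X > r) ≥ c r^{−t} for all sufficiently large r. Set S_0 := 0, S_n := X_1 + ⋯ + X_n, and for k ≥ 0 let S^{−1}(k) := sup{n ≥ 0 : S_n ≤ k}. Then there exists a finite constant C such that, almost surely, S^{−1}(k) ≤ C k^t log log k for all sufficiently large k. -/

import Mathlib

open Filter MeasureTheory ProbabilityTheory

/-- For an i.i.d. nonnegative sequence with `P(X > r) ≥ c r^(-t)` for large `r`,
there is a finite constant `C` such that almost surely, for all sufficiently large `k`,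
`S⁻¹(k) ≤ C k^t log log k`, i.e. every `n` with `S_n ≤ k` satisfies
`n ≤ C k^t log log k`. -/
theorem inverse_random_walk_bound
    {Ω : Type*} [MeasurableSpace Ω] (μ : Measure Ω) [IsProbabilityMeasure μ]
    (X : ℕ → Ω → ℝ) (hmeas : ∀ n, Measurable (X n))
    (hnonneg : ∀ n ω, 0 ≤ X n ω)
    (hindep : iIndepFun X μ)
    (hident : ∀ n, IdentDistrib (X n) (X 0) μ μ)
    (c t : ℝ) (hc : 0 < c) (ht : 0 < t)
    (htail : ∃ r₀ : ℝ, ∀ r : ℝ, r₀ ≤ r →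
      ENNReal.ofReal (c * r ^ (-t)) ≤ μ {ω | r < X 0 ω}) :
    ∃ C : ℝ, ∀ᵐ ω ∂μ, ∀ᶠ k : ℕ in atTop, ∀ n : ℕ,
      (∑ i ∈ Finset.range n, X i ω) ≤ (k : ℝ) →
        (n : ℝ) ≤ C * (k : ℝ) ^ t * Real.log (Real.log k) := by
  classical
  obtain ⟨r₀, hr₀⟩ := htail
  set j₀ : ℕ := max 3 ⌈r₀⌉₊ with hj₀def
  have hj₀3 : 3 ≤ j₀ := le_max_left _ _
  have hr₀j₀ : r₀ ≤ (2:ℝ) ^ j₀ := by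
    have h1 : r₀ ≤ (⌈r₀⌉₊ : ℝ) := Nat.le_ceil r₀
    have h2 : (⌈r₀⌉₊ : ℕ) ≤ 2 ^ ⌈r₀⌉₊ := (Nat.lt_two_pow_self (n := _)).le
    have h3 : (2:ℕ) ^ ⌈r₀⌉₊ ≤ 2 ^ j₀ := Nat.pow_le_pow_right (by norm_num) (le_max_right _ _)
    calc r₀ ≤ (⌈r₀⌉₊ : ℝ) := h1
      _ ≤ ((2 ^ j₀ : ℕ) : ℝ) := by exact_mod_cast h2.trans h3
      _ = (2:ℝ) ^ j₀ := by push_cast; ring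
  set m : ℕ → ℕ := fun j => ⌈(2 / c) * ((2:ℝ) ^ j) ^ t * Real.log j⌉₊ with hm
  set A : ℕ → Set Ω := fun j => ⋂ i ∈ Finset.range (m j), X i ⁻¹' Set.Iic ((2:ℝ) ^ j) with hA
  have htail' : ∀ j, j₀ ≤ j →
      ENNReal.ofReal (c * ((2:ℝ) ^ j) ^ (-t)) ≤ μ {ω | (2:ℝ) ^ j < X 0 ω} := by
    intro j hj
    exact hr₀ _ (hr₀j₀.trans (pow_le_pow_right₀ (by norm_num) hj))
  have hAj : ∀ j, μ (A j) = μ (X 0 ⁻¹' Set.Iic ((2:ℝ) ^ j)) ^ (m j) := by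
    intro j
    have := hindep.meas_biInter (S := Finset.range (m j))
      (s := fun i => X i ⁻¹' Set.Iic ((2:ℝ) ^ j))
      (fun i _ => ⟨Set.Iic ((2:ℝ) ^ j), measurableSet_Iic, rfl⟩)
    rw [hA] ; rw [this]
    rw [Finset.prod_congr rfl (fun i _ => (hident i).measure_mem_eq measurableSet_Iic)]
    rw [Finset.prod_const, Finset.card_range]
  have key : ∀ j, j₀ ≤ j → μ (A j) ≤ ENNReal.ofReal ((j:ℝ) ^ (-2:ℝ)) := by
    intro j hj
    have hjpos : (0:ℝ) < j := by
      have : (3:ℕ) ≤ j := hj₀3.trans hj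
      exact_mod_cast Nat.lt_of_lt_of_le (by norm_num) this
    set R : ℝ := (2:ℝ) ^ j with hR
    have hRpos : (0:ℝ) < R := by positivity
    have hx1 : c * R ^ (-t) ≤ 1 :=
      ENNReal.ofReal_le_one.mp ((htail' j hj).trans prob_le_one)
    have hxpos : 0 < c * R ^ (-t) := by positivity
    have hcompl : X 0 ⁻¹' Set.Iic R = {ω | R < X 0 ω}ᶜ := by
      ext ω; simp [not_lt]
    have hmeasIoi : MeasurableSet {ω | R < X 0 ω} := by
      have : {ω | R < X 0 ω} = X 0 ⁻¹' Set.Ioi R := rfl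
      rw [this]; exact (hmeas 0) measurableSet_Ioi
    have hp : μ (X 0 ⁻¹' Set.Iic R) ≤ ENNReal.ofReal (1 - c * R ^ (-t)) := by
      rw [hcompl, prob_compl_eq_one_sub hmeasIoi]
      calc (1 : ENNReal) - μ {ω | R < X 0 ω}
          ≤ 1 - ENNReal.ofReal (c * R ^ (-t)) := tsub_le_tsub_left (htail' j hj) 1
        _ = ENNReal.ofReal (1 - c * R ^ (-t)) := by
            rw [← ENNReal.ofReal_one, ← ENNReal.ofReal_sub _ hxpos.le]
    have hy : 0 ≤ 1 - c * R ^ (-t) := by linarith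
    have step : μ (A j) ≤ ENNReal.ofReal ((1 - c * R ^ (-t)) ^ (m j)) := by
      rw [hAj j, ENNReal.ofReal_pow hy]
      exact pow_le_pow_left' hp _
    refine step.trans (ENNReal.ofReal_le_ofReal ?_)
    have h1 : (1 - c * R ^ (-t)) ^ (m j) ≤ Real.exp (-(c * R ^ (-t))) ^ (m j) := by
      apply pow_le_pow_left₀ hy
      linarith [Real.add_one_le_exp (-(c * R ^ (-t)))]
    have h2 : Real.exp (-(c * R ^ (-t))) ^ (m j)
        = Real.exp ((m j : ℝ) * -(c * R ^ (-t))) := (Real.exp_nat_mul _ _).symm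
    have hlognn : 0 ≤ Real.log j := Real.log_nonneg (by exact_mod_cast Nat.one_le_iff_ne_zero.mpr (by omega))
    have hmx : 2 * Real.log j ≤ (m j : ℝ) * (c * R ^ (-t)) := by
      have hceil : (2 / c) * R ^ t * Real.log j ≤ (m j : ℝ) := Nat.le_ceil _
      have hRt : R ^ t * R ^ (-t) = 1 := by
        rw [← Real.rpow_add hRpos]; simp
      have heq : ((2 / c) * R ^ t * Real.log j) * (c * R ^ (-t))
          = 2 * Real.log j * (R ^ t * R ^ (-t)) := by
        field_simp
      have := mul_le_mul_of_nonneg_right hceil hxpos.le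
      rw [heq, hRt] at this
      linarith
    have h3 : Real.exp ((m j : ℝ) * -(c * R ^ (-t))) ≤ Real.exp (Real.log j * (-2)) := by
      apply Real.exp_le_exp.2
      nlinarith
    have h4 : Real.exp (Real.log j * (-2)) = (j:ℝ) ^ (-2:ℝ) :=
      (Real.rpow_def_of_pos hjpos _).symm
    calc (1 - c * R ^ (-t)) ^ (m j) ≤ Real.exp (-(c * R ^ (-t))) ^ (m j) := h1
      _ = Real.exp ((m j : ℝ) * -(c * R ^ (-t))) := h2
      _ ≤ Real.exp (Real.log j * (-2)) := h3
      _ = (j:ℝ) ^ (-2:ℝ) := h4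
  have hsum : (∑' j, μ (A j)) ≠ ⊤ := by
    have hle : ∀ j, μ (A j) ≤
        Set.indicator (↑(Finset.range j₀)) (fun _ => (1:ENNReal)) j
          + ENNReal.ofReal ((j:ℝ) ^ (-2:ℝ)) := by
      intro j
      by_cases hj : j < j₀
      · have : Set.indicator (↑(Finset.range j₀)) (fun _ => (1:ENNReal)) j = 1 :=
          Set.indicator_of_mem (by simpa using hj) _
        rw [this]
        exact le_trans prob_le_one le_self_add
      · exact (key j (le_of_not_gt hj)).trans le_add_self
    refine ne_of_lt (lt_of_le_of_lt (ENNReal.tsum_le_tsum hle) ?_)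
    rw [ENNReal.tsum_add]
    apply ENNReal.add_lt_top.2
    constructor
    · rw [← sum_eq_tsum_indicator]
      exact ENNReal.sum_lt_top.2 fun _ _ => ENNReal.one_lt_top
    · rw [← ENNReal.ofReal_tsum_of_nonneg
        (fun n => Real.rpow_nonneg (Nat.cast_nonneg n) _)
        (Real.summable_nat_rpow.2 (by norm_num))]
      exact ENNReal.ofReal_lt_top
  have hBC := MeasureTheory.ae_eventually_notMem hsum
  refine ⟨(4 / c) * (2:ℝ) ^ t, ?_⟩
  filter_upwards [hBC] with ω hω
  obtain ⟨J, hJ⟩ := Filter.eventually_atTop.1 hω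
  have hlog : Filter.Tendsto (fun k : ℕ => Real.log k) atTop atTop :=
    Real.tendsto_log_atTop.comp tendsto_natCast_atTop_atTop
  filter_upwards [Filter.eventually_ge_atTop (2 ^ (max J j₀)),
    hlog.eventually_ge_atTop 3, Filter.eventually_ge_atTop 2] with k hk1 hk2 hk3
  intro n hn
  set j : ℕ := Nat.clog 2 k with hjdef
  have hjN : max J j₀ ≤ j := by
    have := Nat.clog_mono_right 2 hk1
    rwa [Nat.clog_pow 2 _ (by norm_num)] at this
  have hjJ : J ≤ j := le_trans (le_max_left _ _) hjN
  have hjj₀ : j₀ ≤ j := le_trans (le_max_right _ _) hjN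
  have hj3 : 3 ≤ j := hj₀3.trans hjj₀
  have hkpos : (0:ℝ) < k := by
    have : (2:ℕ) ≤ k := hk3
    exact_mod_cast Nat.lt_of_lt_of_le (by norm_num) this
  have hkle : (k:ℝ) ≤ (2:ℝ) ^ j := by
    have := Nat.le_pow_clog (b := 2) (by norm_num) k
    calc (k:ℝ) ≤ ((2 ^ j : ℕ) : ℝ) := by exact_mod_cast this
      _ = (2:ℝ) ^ j := by push_cast; ring
  have hubn : (2:ℕ) ^ j ≤ 2 * k := by
    have h1 : (2:ℕ) ^ (j - 1) < k := Nat.pow_pred_clog_lt_self (by norm_num) (by omega)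
    have h2 : (2:ℕ) ^ j = 2 * 2 ^ (j - 1) := by
      rw [← pow_succ']
      congr 1
      omega
    omega
  have hub : (2:ℝ) ^ j ≤ 2 * (k:ℝ) := by
    calc (2:ℝ) ^ j = ((2 ^ j : ℕ) : ℝ) := by push_cast; ring
      _ ≤ ((2 * k : ℕ) : ℝ) := by exact_mod_cast hubn
      _ = 2 * (k:ℝ) := by push_cast; ring
  have hnotA : ω ∉ A j := hJ j hjJ
  have hex : ∃ i, i < m j ∧ (2:ℝ) ^ j < X i ω := by
    rw [hA] at hnotA
    simp only [Set.mem_iInter, Finset.mem_range, Set.mem_preimage, Set.mem_Iic, not_forall,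
      not_le] at hnotA
    obtain ⟨i, hi1, hi2⟩ := hnotA
    exact ⟨i, hi1, hi2⟩
  obtain ⟨i, hi, hXi⟩ := hex
  have hnm : n < m j := by
    by_contra h
    push_neg at h
    have hXik : X i ω ≤ (k:ℝ) :=
      le_trans (Finset.single_le_sum (fun i _ => hnonneg i ω)
        (Finset.mem_range.2 (lt_of_lt_of_le hi h))) hn
    exact absurd (hXik.trans hkle) (not_le.2 hXi)
  have hx : (n:ℝ) < (2 / c) * ((2:ℝ) ^ j) ^ t * Real.log j := Nat.lt_ceil.1 hnm
  have hb1 : ((2:ℝ) ^ j) ^ t ≤ (2:ℝ) ^ t * (k:ℝ) ^ t := by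
    calc ((2:ℝ) ^ j) ^ t ≤ (2 * (k:ℝ)) ^ t :=
          Real.rpow_le_rpow (by positivity) hub ht.le
      _ = (2:ℝ) ^ t * (k:ℝ) ^ t := Real.mul_rpow (by norm_num) hkpos.le
  have hlogk3 : (3:ℝ) ≤ Real.log k := hk2
  have hb2 : Real.log j ≤ 2 * Real.log (Real.log k) := by
    have hjle : (j:ℝ) ≤ 3 * Real.log k := by
      have h1 : (2:ℕ) ^ (j - 1) < k := Nat.pow_pred_clog_lt_self (by norm_num) (by omega)
      have h1' : ((2:ℝ)) ^ (j - 1 : ℕ) < (k:ℝ) := by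
        calc ((2:ℝ)) ^ (j - 1 : ℕ) = ((2 ^ (j-1) : ℕ) : ℝ) := by push_cast; ring
          _ < (k:ℝ) := by exact_mod_cast h1
      have h2 : ((j:ℝ) - 1) * Real.log 2 < Real.log k := by
        have := Real.log_lt_log (by positivity) h1'
        rw [Real.log_pow] at this
        have hcast : ((j - 1 : ℕ) : ℝ) = (j:ℝ) - 1 := by
          have : 1 ≤ j := by omega
          push_cast [this]; ring
        rwa [hcast] at this
      have hlog2 : (0.6931471803 : ℝ) < Real.log 2 := Real.log_two_gt_d9
      nlinarith
    have hjpos : (0:ℝ) < j := by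
      exact_mod_cast Nat.lt_of_lt_of_le (by norm_num) hj3
    calc Real.log j ≤ Real.log (3 * Real.log k) :=
          Real.log_le_log hjpos hjle
      _ = Real.log 3 + Real.log (Real.log k) :=
          Real.log_mul (by norm_num) (by linarith)
      _ ≤ Real.log (Real.log k) + Real.log (Real.log k) := by
          have : Real.log 3 ≤ Real.log (Real.log k) :=
            Real.log_le_log (by norm_num) hlogk3
          linarith
      _ = 2 * Real.log (Real.log k) := by ring
  have hloglognn : 0 ≤ Real.log (Real.log k) := Real.log_nonneg (by linarith)
  have hlogjnn : 0 ≤ Real.log j := Real.log_nonneg (by exact_mod_cast Nat.one_le_of_lt hj3)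
  have : (n:ℝ) ≤ (2 / c) * ((2:ℝ) ^ t * (k:ℝ) ^ t) * (2 * Real.log (Real.log k)) := by
    have step1 : (2 / c) * ((2:ℝ) ^ j) ^ t * Real.log j
        ≤ (2 / c) * ((2:ℝ) ^ t * (k:ℝ) ^ t) * Real.log j := by
      apply mul_le_mul_of_nonneg_right _ hlogjnn
      apply mul_le_mul_of_nonneg_left hb1 (by positivity)
    have step2 : (2 / c) * ((2:ℝ) ^ t * (k:ℝ) ^ t) * Real.log j
        ≤ (2 / c) * ((2:ℝ) ^ t * (k:ℝ) ^ t) * (2 * Real.log (Real.log k)) := by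
      apply mul_le_mul_of_nonneg_left hb2 (by positivity)
    linarith
  calc (n:ℝ) ≤ (2 / c) * ((2:ℝ) ^ t * (k:ℝ) ^ t) * (2 * Real.log (Real.log k)) := this
    _ = (4 / c) * (2:ℝ) ^ t * (k:ℝ) ^ t * Real.log (Real.log k) := by ring
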